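/- Let α ≠ 0 and ĝ_n^{(k)} = g_n^{(k)} ∘ W_α as above. For integers k ≥ 2 and n ≥ 2 and x in the interior of the support of W_α, the second derivative satisfies (ĝ_n^{(k)})''(x) = (1/(1−αx)^2) · [k²·ĝ_{n−2}^{(k)}(x) − k(2k−α−2)·ĝ_{n−1}^{(k)}(x) + (k−1)(k−1−α)·ĝ_n^{(k)}(x)]. -/

import Mathlib

open MeasureTheory Real

/-- Density of the n-th value of the k-th record from a standard uniform parent. -/
noncomputable def recg (k n : ℕ) (x : ℝ) : ℝ :=
  (k : ℝ) ^ (n + 1) / (Nat.factorial n) * (-Real.log (1 - x)) ^ n * (1 - x) ^ (k - 1)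

/-- The generalized Pareto distribution function (α ≠ 0). -/
noncomputable def Wgpd (α : ℝ) (x : ℝ) : ℝ := 1 - (1 - α * x) ^ (1 / α)

/-- The uniform k-th record density composed with the generalized Pareto cdf. -/
noncomputable def ghat (α : ℝ) (k n : ℕ) (x : ℝ) : ℝ := recg k n (Wgpd α x)

/-- Closed form of `ghat` on the region `0 < 1 - α x`. -/
noncomputable def Fcl (α : ℝ) (k m : ℕ) (x : ℝ) : ℝ :=
  (k : ℝ) ^ (m + 1) / (Nat.factorial m) * (-(1 / α * Real.log (1 - α * x))) ^ m *
    (1 - α * x) ^ (((k : ℝ) - 1) / α)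

lemma ghat_eq_Fcl (α : ℝ) (hα : α ≠ 0) (k : ℕ) (hk : 2 ≤ k) (m : ℕ) (x : ℝ)
    (hx : 0 < 1 - α * x) : ghat α k m x = Fcl α k m x := by
  have hbase : (0:ℝ) < (1 - α * x) ^ (1 / α) := Real.rpow_pos_of_pos hx _
  have h1 : 1 - Wgpd α x = (1 - α * x) ^ (1 / α) := by simp [Wgpd]
  unfold ghat recg Fcl
  rw [h1, Real.log_rpow hx]
  congr 1
  rw [← Real.rpow_natCast ((1 - α * x) ^ (1 / α)) (k - 1), ← Real.rpow_mul hx.le]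
  congr 1
  have : ((k - 1 : ℕ) : ℝ) = (k : ℝ) - 1 := by
    have : 1 ≤ k := by omega
    push_cast [this]; ring
  rw [this]; field_simp

lemma hasDerivAt_Fcl (α : ℝ) (hα : α ≠ 0) (k : ℕ) (hk : 2 ≤ k) (j : ℕ) (x : ℝ)
    (hx : 0 < 1 - α * x) :
    HasDerivAt (Fcl α k (j + 1))
      (1 / (1 - α * x) * ((k : ℝ) * Fcl α k j x - ((k : ℝ) - 1) * Fcl α k (j + 1) x)) x := by
  have hne : (1 - α * x) ≠ 0 := ne_of_gt hx
  -- inner affine function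
  have hin : HasDerivAt (fun y : ℝ => 1 - α * y) (-α) x := by
    simpa using ((hasDerivAt_id x).const_mul α).const_sub 1
  -- log part
  have hL : HasDerivAt (fun y : ℝ => -(1 / α * Real.log (1 - α * y))) (1 / (1 - α * x)) x := by
    have := ((Real.hasDerivAt_log hne).comp x hin).const_mul (1 / α)
    have h2 := this.neg
    refine h2.congr_deriv ?_
    field_simp
  -- power of log part
  have hLp : HasDerivAt (fun y : ℝ => (-(1 / α * Real.log (1 - α * y))) ^ (j + 1))
      ((j + 1 : ℝ) * (-(1 / α * Real.log (1 - α * x))) ^ j * (1 / (1 - α * x))) x := by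
    simpa using hL.fun_pow (j + 1)
  -- rpow part
  have hP : HasDerivAt (fun y : ℝ => (1 - α * y) ^ (((k : ℝ) - 1) / α))
      (-((k : ℝ) - 1) * ((1 - α * x) ^ (((k : ℝ) - 1) / α) / (1 - α * x))) x := by
    have h0 := (Real.hasDerivAt_rpow_const (p := ((k : ℝ) - 1) / α) (Or.inl hne)).comp x hin
    refine h0.congr_deriv ?_
    rw [Real.rpow_sub hx, Real.rpow_one]
    field_simp
  have hprod := (hLp.fun_mul hP).const_mul ((k : ℝ) ^ (j + 1 + 1) / (Nat.factorial (j + 1)))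
  convert hprod using 1
  · rfl
  · rfl
  · unfold Fcl; ext y; ring
  unfold Fcl
  have hfac : ((Nat.factorial (j + 1) : ℝ)) = (j + 1) * (Nat.factorial j) := by
    push_cast [Nat.factorial_succ]; ring
  have hfj : ((Nat.factorial j : ℝ)) ≠ 0 := by positivity
  rw [hfac]
  field_simp
  ring

theorem stmt6 (α : ℝ) (hα : α ≠ 0) (k n : ℕ) (hk : 2 ≤ k) (hn : 2 ≤ n)
    (x : ℝ) (hx : 0 < x) (hx' : 0 < 1 - α * x) :
    HasDerivAt (deriv (ghat α k n))
      ((1 / (1 - α * x) ^ 2) *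
        ((k : ℝ) ^ 2 * ghat α k (n - 2) x
          - (k : ℝ) * (2 * (k : ℝ) - α - 2) * ghat α k (n - 1) x
          + ((k : ℝ) - 1) * ((k : ℝ) - 1 - α) * ghat α k n x)) x := by
  obtain ⟨m, rfl⟩ : ∃ m, n = m + 2 := ⟨n - 2, by omega⟩
  have hne : (1 - α * x) ≠ 0 := ne_of_gt hx'
  set S : Set ℝ := {y | 0 < 1 - α * y} with hS
  have hSopen : IsOpen S := isOpen_lt continuous_const (by continuity)
  have hxS : x ∈ S := hx'
  -- the candidate first-derivative function
  set D : ℝ → ℝ := fun y => 1 / (1 - α * y) *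
      ((k : ℝ) * Fcl α k (m + 1) y - ((k : ℝ) - 1) * Fcl α k (m + 2) y) with hD
  have hDeq : deriv (ghat α k (m + 2)) =ᶠ[nhds x] D := by
    filter_upwards [hSopen.mem_nhds hxS] with y hy
    have hEq : ghat α k (m + 2) =ᶠ[nhds y] Fcl α k (m + 2) := by
      filter_upwards [hSopen.mem_nhds hy] with z hz
      exact ghat_eq_Fcl α hα k hk _ z hz
    rw [hEq.deriv_eq, (hasDerivAt_Fcl α hα k hk (m + 1) y hy).deriv]
  -- compute HasDerivAt for D
  have hin : HasDerivAt (fun y : ℝ => 1 - α * y) (-α) x := by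
    simpa using ((hasDerivAt_id x).const_mul α).const_sub 1
  have hinv : HasDerivAt (fun y : ℝ => 1 / (1 - α * y)) (α / (1 - α * x) ^ 2) x := by
    simpa [one_div, neg_neg] using hin.fun_inv hne
  have h1 := hasDerivAt_Fcl α hα k hk m x hx'
  have h2 := hasDerivAt_Fcl α hα k hk (m + 1) x hx'
  have hG : HasDerivAt (fun y => (k : ℝ) * Fcl α k (m + 1) y - ((k : ℝ) - 1) * Fcl α k (m + 2) y)
      ((k : ℝ) * (1 / (1 - α * x) * ((k : ℝ) * Fcl α k m x - ((k : ℝ) - 1) * Fcl α k (m + 1) x))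
        - ((k : ℝ) - 1) * (1 / (1 - α * x) *
          ((k : ℝ) * Fcl α k (m + 1) x - ((k : ℝ) - 1) * Fcl α k (m + 2) x))) x :=
    (h1.const_mul _).sub (h2.const_mul _)
  have hDder := hinv.fun_mul hG
  have key : HasDerivAt D
      ((1 / (1 - α * x) ^ 2) *
        ((k : ℝ) ^ 2 * Fcl α k m x
          - (k : ℝ) * (2 * (k : ℝ) - α - 2) * Fcl α k (m + 1) x
          + ((k : ℝ) - 1) * ((k : ℝ) - 1 - α) * Fcl α k (m + 2) x)) x := by
    convert hDder using 1
    · rfl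
    · rfl
    field_simp
    ring
  have hfin := key.congr_of_eventuallyEq hDeq
  have e0 : ghat α k (m + 2 - 2) x = Fcl α k m x := by
    simpa using ghat_eq_Fcl α hα k hk m x hx'
  have e1 : ghat α k (m + 2 - 1) x = Fcl α k (m + 1) x := by
    simpa using ghat_eq_Fcl α hα k hk (m + 1) x hx'
  have e2 : ghat α k (m + 2) x = Fcl α k (m + 2) x := ghat_eq_Fcl α hα k hk (m + 2) x hx'
  rw [e0, e1, e2]
  exact hfin
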